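/- Given a finite set E = {a_1,…,a_N} ⊂ ℝ^d and fixed values f: E → ℝ, the function g: ℝ^{dN} → ℝ defined by g(Y) = Γ¹(P_Y; E), where Y = (y_1,…,y_N) and P_{Y,a_k}(x) = f(a_k) + y_k·(x - a_k), is convex in Y. -/

import Mathlib

open RealInnerProductSpace

/-- Convexity of a finite sup' of convex functions. -/
lemma convexOn_finset_sup' {ι β : Type*} [AddCommGroup β] [Module ℝ β] {t : Set β}
    {s : Finset ι} (hs : s.Nonempty) {f : ι → β → ℝ}
    (hf : ∀ i ∈ s, ConvexOn ℝ t (f i)) :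
    ConvexOn ℝ t fun x => s.sup' hs (f · x) := by
  induction hs using Finset.Nonempty.cons_induction with
  | singleton i => exact hf i (by simp)
  | cons i s hi hs ih =>
      simp only [Finset.sup'_cons hs]
      exact (hf i (by simp)).sup (ih fun j hj => hf j (by simp [hj]))

lemma phi_convex {d : ℕ} :
    ConvexOn ℝ Set.univ (fun q : ℝ × EuclideanSpace ℝ (Fin d) =>
      Real.sqrt (q.1 ^ 2 + ‖q.2‖ ^ 2) + |q.1|) := by
  have h1 : ConvexOn ℝ Set.univ
      (fun q : ℝ × EuclideanSpace ℝ (Fin d) =>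
        ‖(WithLp.equiv 2 (ℝ × EuclideanSpace ℝ (Fin d))).symm q‖) := by
    have := (convexOn_univ_norm
        (E := WithLp 2 (ℝ × EuclideanSpace ℝ (Fin d)))).comp_affineMap
      ((WithLp.linearEquiv 2 ℝ (ℝ × EuclideanSpace ℝ (Fin d))).symm.toLinearMap.toAffineMap)
    simpa [Function.comp_def] using this
  have h2 : ConvexOn ℝ Set.univ (fun q : ℝ × EuclideanSpace ℝ (Fin d) => |q.1|) := by
    have := (convexOn_univ_norm (E := ℝ)).comp_affineMap
      ((LinearMap.fst ℝ ℝ (EuclideanSpace ℝ (Fin d))).toAffineMap)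
    simpa [Real.norm_eq_abs, Function.comp_def] using this
  have heq : (fun q : ℝ × EuclideanSpace ℝ (Fin d) =>
      Real.sqrt (q.1 ^ 2 + ‖q.2‖ ^ 2) + |q.1|)
      = fun q => ‖(WithLp.equiv 2 (ℝ × EuclideanSpace ℝ (Fin d))).symm q‖ + |q.1| := by
    funext q
    congr 1
    have h := WithLp.prod_norm_eq_of_nat (p := 2) 2 (by norm_num)
      ((WithLp.equiv 2 (ℝ × EuclideanSpace ℝ (Fin d))).symm q)
    rw [h, WithLp.toLp_fst, WithLp.toLp_snd, Real.sqrt_eq_rpow,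
      Real.norm_eq_abs, sq_abs]
    norm_num
  rw [heq]
  exact h1.add h2

lemma pair_convex {d : ℕ} {ι : Type*} (j k : ι) (v : EuclideanSpace ℝ (Fin d))
    (hv : v ≠ 0) (c : ℝ) :
    ConvexOn ℝ Set.univ (fun Y : ι → EuclideanSpace ℝ (Fin d) =>
      Real.sqrt ((|c - ⟪Y j + Y k, v⟫| / ‖v‖ ^ 2) ^ 2 + (‖Y j - Y k‖ / ‖v‖) ^ 2)
        + |c - ⟪Y j + Y k, v⟫| / ‖v‖ ^ 2) := by
  have hn : (0:ℝ) < ‖v‖ := norm_pos_iff.mpr hv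
  set T : (ι → EuclideanSpace ℝ (Fin d)) → ℝ × EuclideanSpace ℝ (Fin d) :=
    fun Y => ((c - ⟪Y j + Y k, v⟫) / ‖v‖ ^ 2, (‖v‖)⁻¹ • (Y j - Y k)) with hT
  have heq : ∀ Y : ι → EuclideanSpace ℝ (Fin d),
      Real.sqrt ((|c - ⟪Y j + Y k, v⟫| / ‖v‖ ^ 2) ^ 2 + (‖Y j - Y k‖ / ‖v‖) ^ 2)
        + |c - ⟪Y j + Y k, v⟫| / ‖v‖ ^ 2
      = Real.sqrt ((T Y).1 ^ 2 + ‖(T Y).2‖ ^ 2) + |(T Y).1| := by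
    intro Y
    have h1 : (T Y).1 ^ 2 = (|c - ⟪Y j + Y k, v⟫| / ‖v‖ ^ 2) ^ 2 := by
      rw [hT, div_pow, div_pow, sq_abs]
    have h2 : ‖(T Y).2‖ ^ 2 = (‖Y j - Y k‖ / ‖v‖) ^ 2 := by
      rw [hT]
      simp [norm_smul, div_eq_inv_mul, abs_of_nonneg hn.le]
    have h3 : |(T Y).1| = |c - ⟪Y j + Y k, v⟫| / ‖v‖ ^ 2 := by
      rw [hT, abs_div, abs_of_nonneg (by positivity : (0:ℝ) ≤ ‖v‖ ^ 2)]
    rw [h1, h2, h3]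
  refine ⟨convex_univ, fun x _ y _ p q hp hq hpq => ?_⟩
  have hTaff : T (p • x + q • y) = p • T x + q • T y := by
    rw [hT]
    refine Prod.ext ?_ ?_
    · simp only [Pi.add_apply, Pi.smul_apply, Prod.smul_fst, Prod.fst_add, smul_eq_mul]
      have hinner : ⟪p • x j + q • y j + (p • x k + q • y k), v⟫
          = p * ⟪x j + x k, v⟫ + q * ⟪y j + y k, v⟫ := by
        simp only [inner_add_left, real_inner_smul_left]
        ring
      rw [hinner]
      linear_combination (-c / ‖v‖ ^ 2) * hpq
    · simp only [Pi.add_apply, Pi.smul_apply, Prod.smul_snd, Prod.snd_add]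
      rw [smul_comm, smul_comm (q : ℝ)]
      rw [← smul_add]
      congr 1
      module
  dsimp only
  rw [heq, heq, heq, hTaff]
  have := phi_convex.2 (Set.mem_univ (T x)) (Set.mem_univ (T y)) hp hq hpq
  simpa using this

/-- The functional `g(Y) = Γ¹(P_Y; E)` is convex in the gradients `Y`. -/
theorem gamma1_convex_in_gradients {d N : ℕ} (hN : 2 ≤ N)
    (a : Fin N → EuclideanSpace ℝ (Fin d)) (ha : Function.Injective a)
    (f : Fin N → ℝ) :
    ConvexOn ℝ Set.univ (fun Y : Fin N → EuclideanSpace ℝ (Fin d) =>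
      sSup {r : ℝ | ∃ j k : Fin N, j ≠ k ∧
        r = Real.sqrt
              ((|f j - (f k + ⟪Y k, a j - a k⟫) + (f j + ⟪Y j, a k - a j⟫) - f k|
                  / ‖a j - a k‖ ^ 2) ^ 2
                + (‖Y j - Y k‖ / ‖a j - a k‖) ^ 2)
            + |f j - (f k + ⟪Y k, a j - a k⟫) + (f j + ⟪Y j, a k - a j⟫) - f k|
                / ‖a j - a k‖ ^ 2}) := by
  classical
  set F : Fin N × Fin N → (Fin N → EuclideanSpace ℝ (Fin d)) → ℝ :=
    fun p Y => Real.sqrt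
        ((|f p.1 - (f p.2 + ⟪Y p.2, a p.1 - a p.2⟫) + (f p.1 + ⟪Y p.1, a p.2 - a p.1⟫) - f p.2|
            / ‖a p.1 - a p.2‖ ^ 2) ^ 2
          + (‖Y p.1 - Y p.2‖ / ‖a p.1 - a p.2‖) ^ 2)
      + |f p.1 - (f p.2 + ⟪Y p.2, a p.1 - a p.2⟫) + (f p.1 + ⟪Y p.1, a p.2 - a p.1⟫) - f p.2|
          / ‖a p.1 - a p.2‖ ^ 2 with hF
  set s : Finset (Fin N × Fin N) := Finset.univ.filter (fun p => p.1 ≠ p.2) with hs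
  have hsne : s.Nonempty := by
    refine ⟨(⟨0, by omega⟩, ⟨1, by omega⟩), ?_⟩
    simp only [hs, Finset.mem_filter, Finset.mem_univ, true_and]
    intro h
    exact absurd (congrArg Fin.val h) (by simp)
  have hfun : (fun Y : Fin N → EuclideanSpace ℝ (Fin d) =>
      sSup {r : ℝ | ∃ j k : Fin N, j ≠ k ∧
        r = Real.sqrt
              ((|f j - (f k + ⟪Y k, a j - a k⟫) + (f j + ⟪Y j, a k - a j⟫) - f k|
                  / ‖a j - a k‖ ^ 2) ^ 2
                + (‖Y j - Y k‖ / ‖a j - a k‖) ^ 2)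
            + |f j - (f k + ⟪Y k, a j - a k⟫) + (f j + ⟪Y j, a k - a j⟫) - f k|
                / ‖a j - a k‖ ^ 2})
      = fun Y => s.sup' hsne (fun p => F p Y) := by
    funext Y
    rw [Finset.sup'_eq_csSup_image]
    congr 1
    ext r
    simp only [Set.mem_setOf_eq, Set.mem_image, Finset.mem_coe, Finset.mem_filter,
      Finset.mem_univ, true_and, hs, hF]
    constructor
    · rintro ⟨j, k, hjk, rfl⟩
      exact ⟨(j, k), hjk, rfl⟩
    · rintro ⟨⟨j, k⟩, hjk, rfl⟩
      exact ⟨j, k, hjk, rfl⟩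
  rw [hfun]
  refine convexOn_finset_sup' hsne fun p hp => ?_
  have hjk : p.1 ≠ p.2 := by simpa [hs] using hp
  have hv : a p.1 - a p.2 ≠ 0 := sub_ne_zero_of_ne (fun h => hjk (ha h))
  have key : ∀ Y : Fin N → EuclideanSpace ℝ (Fin d),
      |f p.1 - (f p.2 + ⟪Y p.2, a p.1 - a p.2⟫) + (f p.1 + ⟪Y p.1, a p.2 - a p.1⟫) - f p.2|
      = |(2 * f p.1 - 2 * f p.2) - ⟪Y p.1 + Y p.2, a p.1 - a p.2⟫| := by
    intro Y
    congr 1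
    rw [inner_add_left, show a p.2 - a p.1 = -(a p.1 - a p.2) by abel, inner_neg_right]
    ring
  have hfun2 : F p = fun Y : Fin N → EuclideanSpace ℝ (Fin d) =>
      Real.sqrt ((|(2 * f p.1 - 2 * f p.2) - ⟪Y p.1 + Y p.2, a p.1 - a p.2⟫|
          / ‖a p.1 - a p.2‖ ^ 2) ^ 2 + (‖Y p.1 - Y p.2‖ / ‖a p.1 - a p.2‖) ^ 2)
        + |(2 * f p.1 - 2 * f p.2) - ⟪Y p.1 + Y p.2, a p.1 - a p.2⟫| / ‖a p.1 - a p.2‖ ^ 2 := by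
    funext Y
    rw [hF]
    simp only [key]
  rw [hfun2]
  exact pair_convex p.1 p.2 (a p.1 - a p.2) hv (2 * f p.1 - 2 * f p.2)
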